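/- Graph representation of the two-mode squeezed state: let r ∈ ℝ, U = sech(2r)·I₂, V = tanh(2r)·J where J = [[0,1],[1,0]]. Then the graph-state covariance matrix satisfies Σ(U,V) = (1/2)·[[cosh(2r)·I₂, sinh(2r)·J],[sinh(2r)·J, cosh(2r)·I₂]]; i.e. the Fourier-rotated two-mode squeezed vacuum of parameter r is exactly the Gaussian graph state with complex graph Z = tanh(2r)·J + i·sech(2r)·I₂. -/
import Mathlib


open Matrix

/-- The quadrature-ordered covariance matrix `Σ(U,V)` of the pure Gaussian state with
complex graph `Z = V + iU`, in the ordering `(Q₁,…,Q_N,P₁,…,P_N)`. -/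
noncomputable def gaussianCov {N : ℕ} (U V : Matrix (Fin N) (Fin N) ℝ) :
    Matrix (Fin N ⊕ Fin N) (Fin N ⊕ Fin N) ℝ :=
  (1 / 2 : ℝ) • Matrix.fromBlocks U⁻¹ (U⁻¹ * V) (V * U⁻¹) (U + V * U⁻¹ * V)

/-- graph representation of the two-mode squeezed state: with
`U = sech(2r)·I₂` and `V = tanh(2r)·J`, `J = [[0,1],[1,0]]`, one has
`Σ(U,V) = (1/2)·[[cosh(2r)·I₂, sinh(2r)·J],[sinh(2r)·J, cosh(2r)·I₂]]`; i.e. the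
Fourier-rotated two-mode squeezed vacuum of parameter `r` is exactly the Gaussian graph
state with complex graph `Z = tanh(2r)·J + i·sech(2r)·I₂`. -/
theorem tmss_is_graph_state (r : ℝ) :
    gaussianCov ((Real.cosh (2 * r))⁻¹ • (1 : Matrix (Fin 2) (Fin 2) ℝ))
        (Real.tanh (2 * r) • !![0, 1; 1, 0])
      = (1 / 2 : ℝ) • Matrix.fromBlocks
          (Real.cosh (2 * r) • (1 : Matrix (Fin 2) (Fin 2) ℝ))
          (Real.sinh (2 * r) • !![0, 1; 1, 0])
          (Real.sinh (2 * r) • !![0, 1; 1, 0])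
          (Real.cosh (2 * r) • (1 : Matrix (Fin 2) (Fin 2) ℝ)) := by
  have hc : Real.cosh (2 * r) ≠ 0 := (Real.cosh_pos (2 * r)).ne'
  have hJ : (!![0, 1; 1, 0] : Matrix (Fin 2) (Fin 2) ℝ) * !![0, 1; 1, 0] = 1 := by
    rw [Matrix.mul_fin_two]; norm_num; exact Matrix.one_fin_two.symm
  have hU : (((Real.cosh (2 * r))⁻¹ • (1 : Matrix (Fin 2) (Fin 2) ℝ)))⁻¹
      = Real.cosh (2 * r) • 1 := by
    apply Matrix.inv_eq_right_inv
    rw [Matrix.smul_mul, Matrix.mul_smul, smul_smul, one_mul, inv_mul_cancel₀ hc, one_smul]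
  have ht : Real.cosh (2 * r) * Real.tanh (2 * r) = Real.sinh (2 * r) := by
    rw [Real.tanh_eq_sinh_div_cosh]; field_simp
  have h12 : Real.cosh (2 * r) • (1 : Matrix (Fin 2) (Fin 2) ℝ)
      * (Real.tanh (2 * r) • !![0, 1; 1, 0]) = Real.sinh (2 * r) • !![0, 1; 1, 0] := by
    rw [Matrix.smul_mul, Matrix.mul_smul, smul_smul, one_mul, ht]
  have h21 : Real.tanh (2 * r) • (!![0, 1; 1, 0] : Matrix (Fin 2) (Fin 2) ℝ)
      * (Real.cosh (2 * r) • 1) = Real.sinh (2 * r) • !![0, 1; 1, 0] := by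
    rw [Matrix.smul_mul, Matrix.mul_smul, smul_smul, mul_comm, ht, Matrix.mul_one]
  have h22 : (Real.cosh (2 * r))⁻¹ • (1 : Matrix (Fin 2) (Fin 2) ℝ)
      + Real.sinh (2 * r) • !![0, 1; 1, 0] * (Real.tanh (2 * r) • !![0, 1; 1, 0])
      = Real.cosh (2 * r) • 1 := by
    rw [Matrix.smul_mul, Matrix.mul_smul, smul_smul, hJ, ← add_smul]
    congr 1
    rw [Real.tanh_eq_sinh_div_cosh]
    have hcs := Real.cosh_sq_sub_sinh_sq (2 * r)
    field_simp
    nlinarith [hcs]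
  unfold gaussianCov
  rw [hU, h12, h21, h22]
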